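/- Consider the deterministic bullet process on finitely many bullets (b_0, b_1, …, b_n) with no triple collisions. Let S_{[1,n]} be the survivor set of the process on (b_1,…,b_n). If S_{[1,n]} is non-empty with first surviving bullet b_{s_1}, then the survivor set S_n of the process on (b_0,…,b_n) equals either S_{[1,n]} \ {b_{s_1}} or S_{[1,n]} ∪ {b_{s_0}} for some index s_0 < s_1. If S_{[1,n]} is empty then |S_n| = 1. -/

import Mathlib

open MeasureTheory ProbabilityTheory Filter Set

noncomputable section

namespace BulletProcess

/-- Firing time of bullet `i`: `t_i = Δ_1 + ⋯ + Δ_i` (the delay `Δ_0` plays no role). -/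
def fireTime (Δ : ℕ → ℝ) (i : ℕ) : ℝ := ∑ j ∈ Finset.Icc 1 i, Δ j

/-- Virtual position of bullet `i` at time `t`. -/
def pos (v Δ : ℕ → ℝ) (i : ℕ) (t : ℝ) : ℝ := v i * (t - fireTime Δ i)

/-- No three bullets are ever simultaneously at the same position. -/
def NoTriple (v Δ : ℕ → ℝ) : Prop :=
  ∀ t : ℝ, ∀ i j k : ℕ, i ≠ j → j ≠ k → i ≠ k →
    fireTime Δ i ≤ t → fireTime Δ j ≤ t → fireTime Δ k ≤ t →
    ¬(pos v Δ i t = pos v Δ j t ∧ pos v Δ j t = pos v Δ k t)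

/-- A consistent annihilation structure for the bullet process on the bullets indexed by `I`:
`partner i = some j` means bullets `i` and `j` mutually annihilate (at time `deathTime i`),
`partner i = none` means bullet `i` survives forever.  The axioms say that matched pairs
really collide (the later bullet is faster and catches the earlier one at their common death
time), and that two bullets that are both fired and still alive never occupy the same
position. -/
structure Dynamics (v Δ : ℕ → ℝ) (I : Set ℕ) where
  partner : ℕ → Option ℕ
  deathTime : ℕ → ℝ
  partner_mem : ∀ i j, i ∈ I → partner i = some j → j ∈ I
  partner_symm : ∀ i j, i ∈ I → j ∈ I → (partner i = some j ↔ partner j = some i)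
  partner_ne : ∀ i, i ∈ I → partner i ≠ some i
  death_symm : ∀ i j, i ∈ I → partner i = some j → deathTime j = deathTime i
  collide : ∀ i j, i ∈ I → i < j → partner i = some j →
    v i < v j ∧ fireTime Δ j ≤ deathTime i ∧
      pos v Δ i (deathTime i) = pos v Δ j (deathTime i)
  no_crossing : ∀ i j, i ∈ I → j ∈ I → i ≠ j → ∀ t : ℝ,
    fireTime Δ i ≤ t → fireTime Δ j ≤ t →
    (partner i = none ∨ t < deathTime i) →
    (partner j = none ∨ t < deathTime j) →
    pos v Δ i t ≠ pos v Δ j t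

namespace Dynamics

variable {v Δ : ℕ → ℝ} {I : Set ℕ}

/-- Bullet `i` survives (is never annihilated). -/
def survives (d : Dynamics v Δ I) (i : ℕ) : Prop := d.partner i = none

/-- The set of surviving bullets. -/
def surv (d : Dynamics v Δ I) : Set ℕ := {i | i ∈ I ∧ d.survives i}

/-- `d.annihilates j i` : the later bullet `j` catches up to and annihilates `i`. -/
def annihilates (d : Dynamics v Δ I) (j i : ℕ) : Prop := i < j ∧ d.partner i = some j

end Dynamics

/-- The probabilistic bullet process on the probability space `(Ω, P)`: i.i.d. velocities with
law `μ` and i.i.d. delays with law `ν` (all independent, and all strictly positive), together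
with a choice of dynamics for every admissible deterministic configuration and every index set
of bullets. -/
structure Setup (Ω : Type) [MeasurableSpace Ω] (P : Measure Ω) (μ ν : Measure ℝ) where
  V : ℕ → Ω → ℝ
  D : ℕ → Ω → ℝ
  Vpos : ∀ i ω, 0 < V i ω
  Dpos : ∀ i ω, 0 < D i ω
  measV : ∀ i, Measurable (V i)
  measD : ∀ i, Measurable (D i)
  lawV : ∀ i, P.map (V i) = μ
  lawD : ∀ i, P.map (D i) = ν
  indep : iIndepFun (m := fun _ : ℕ ⊕ ℕ => (inferInstance : MeasurableSpace ℝ)) (Sum.elim V D) P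
  dyn : ∀ (v Δ : ℕ → ℝ), 0 ≤ v 0 → (∀ i, i ≠ 0 → 0 < v i) → (∀ i, 0 < Δ i) →
    ∀ (I : Set ℕ), Dynamics v Δ I

namespace Setup

variable {Ω : Type} [MeasurableSpace Ω] {P : Measure Ω} {μ ν : Measure ℝ}
variable (B : Setup Ω P μ ν)

/-- The realized sequence of velocities. -/
def vseq (ω : Ω) : ℕ → ℝ := fun i => B.V i ω

/-- The realized sequence of delays. -/
def dseq (ω : Ω) : ℕ → ℝ := fun i => B.D i ω

/-- Validity of the pair `(μ, ν)`: almost surely there are no triple collisions. -/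
def valid : Prop := ∀ᵐ ω ∂P, NoTriple (B.vseq ω) (B.dseq ω)

/-- The dynamics of the bullet process on the bullets indexed by `I`. -/
def dynOn (ω : Ω) (I : Set ℕ) : Dynamics (B.vseq ω) (B.dseq ω) I :=
  B.dyn _ _ (le_of_lt (B.Vpos 0 ω)) (fun i _ => B.Vpos i ω) (fun i => B.Dpos i ω) I

/-- `S`, the survivor set of the full process. -/
def survSet (ω : Ω) : Set ℕ := (B.dynOn ω Set.univ).surv

/-- `S_n`, the survivor set of the truncated process on bullets `b_0, …, b_n`. -/
def truncS (ω : Ω) (n : ℕ) : Set ℕ := (B.dynOn ω (Set.Iic n)).surv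

/-- `b_n` is a potential survivor: it survives in the process on `b_0, …, b_n`. -/
def potSurv (ω : Ω) (n : ℕ) : Prop := (B.dynOn ω (Set.Iic n)).survives n

/-- The dynamics when the velocity of `b_0` is fixed to `v` (junk value `max v 0` if `v < 0`). -/
def dyn0 (vel : ℝ) (ω : Ω) (I : Set ℕ) :
    Dynamics (Function.update (B.vseq ω) 0 (max vel 0)) (B.dseq ω) I :=
  B.dyn _ _ (by simp) (fun i hi => by
      rw [Function.update_of_ne hi]; exact B.Vpos i ω)
    (fun i => B.Dpos i ω) I

/-- The event that the first bullet, with velocity fixed to `v`, survives forever. -/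
def survEvent (vel : ℝ) : Set Ω := {ω | (B.dyn0 vel ω Set.univ).survives 0}

/-- `θ(v)`: the probability that the first bullet survives when its velocity is fixed to `v`. -/
def theta (vel : ℝ) : ℝ := (P (B.survEvent vel)).toReal

/-- The critical velocity `v_c = inf {v ≥ 0 : θ(v) > 0}` (equal to `⊤` if no speed is fast). -/
def vc : EReal :=
  sInf {x : EReal | ∃ vel : ℝ, 0 ≤ vel ∧ 0 < B.theta vel ∧ x = (vel : EReal)}

end Setup

end BulletProcess

namespace BulletProcess

variable {Ω : Type} [MeasurableSpace Ω] {P : MeasureTheory.Measure Ω}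
  [MeasureTheory.IsProbabilityMeasure P] {μ ν : MeasureTheory.Measure ℝ}
  [MeasureTheory.IsProbabilityMeasure μ] [MeasureTheory.IsProbabilityMeasure ν]


section Aux

variable {v Δ : ℕ → ℝ}

lemma fireTime_lt_fireTime (hΔ : ∀ i, 0 < Δ i) {i j : ℕ} (hij : i < j) :
    fireTime Δ i < fireTime Δ j := by
  have h0 : fireTime Δ i = ∑ k ∈ Finset.Ioc 0 i, Δ k := by
    unfold fireTime
    rw [← Finset.Icc_add_one_left_eq_Ioc]; rfl
  have h1 : fireTime Δ j = ∑ k ∈ Finset.Ioc 0 j, Δ k := by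
    unfold fireTime
    rw [← Finset.Icc_add_one_left_eq_Ioc]; rfl
  rw [h0, h1, ← Finset.sum_Ioc_consecutive _ (Nat.zero_le i) (le_of_lt hij)]
  have : 0 < ∑ k ∈ Finset.Ioc i j, Δ k := by
    apply Finset.sum_pos (fun k _ => hΔ k)
    exact ⟨j, by simp [hij]⟩
  linarith

lemma pos_continuous (i : ℕ) : Continuous (fun t => pos v Δ i t) := by
  unfold pos
  exact continuous_const.mul (continuous_id.sub continuous_const)

/-- limit lemma : if `f < g` on `[c, T)` with `c < T` then `f T ≤ g T` for continuous f g. -/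
lemma le_at_endpoint {f g : ℝ → ℝ} (hf : Continuous f) (hg : Continuous g) {c T : ℝ}
    (hcT : c < T) (hlt : ∀ t, c ≤ t → t < T → f t < g t) : f T ≤ g T := by
  have h1 : Filter.Tendsto (fun t => g t - f t) (nhdsWithin T (Set.Iio T))
      (nhds (g T - f T)) := ((hg.sub hf).tendsto T).mono_left nhdsWithin_le_nhds
  have h2 : ∀ᶠ t in nhdsWithin T (Set.Iio T), 0 ≤ g t - f t := by
    filter_upwards [Ico_mem_nhdsLT_of_mem (show T ∈ Set.Ioc c T from ⟨hcT, le_rfl⟩)] with t ht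
    exact sub_nonneg.2 (le_of_lt (hlt t ht.1 ht.2))
  have := ge_of_tendsto h1 h2
  linarith

namespace Dynamics

variable {I : Set ℕ}

/-- Order lemma: at any time `t` where both `i < k` are fired and alive, `i` is strictly
ahead of `k`. -/
lemma order (d : Dynamics v Δ I) (hv : ∀ i, 0 < v i) (hΔ : ∀ i, 0 < Δ i)
    {i k : ℕ} (hi : i ∈ I) (hk : k ∈ I) (hik : i < k) {t : ℝ}
    (htk : fireTime Δ k ≤ t)
    (hai : d.partner i = none ∨ t < d.deathTime i)
    (hak : d.partner k = none ∨ t < d.deathTime k) :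
    pos v Δ k t < pos v Δ i t := by
  have hfik : fireTime Δ i < fireTime Δ k := fireTime_lt_fireTime hΔ hik
  have hstart : pos v Δ k (fireTime Δ k) < pos v Δ i (fireTime Δ k) := by
    unfold pos
    have : 0 < v i * (fireTime Δ k - fireTime Δ i) :=
      mul_pos (hv i) (by linarith)
    simp only [sub_self, mul_zero]
    linarith
  rcases eq_or_lt_of_le htk with rfl | hlt
  · exact hstart
  · -- no crossing on [t_k, t]
    have hne : ∀ s, fireTime Δ k ≤ s → s ≤ t → pos v Δ i s ≠ pos v Δ k s := by
      intro s hs1 hs2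
      apply d.no_crossing i k hi hk (Nat.ne_of_lt hik) s (le_trans (le_of_lt hfik) hs1) hs1
      · rcases hai with h | h
        · exact Or.inl h
        · exact Or.inr (lt_of_le_of_lt hs2 h)
      · rcases hak with h | h
        · exact Or.inl h
        · exact Or.inr (lt_of_le_of_lt hs2 h)
    by_contra hcon
    push_neg at hcon
    rcases eq_or_lt_of_le hcon with heq | hltp
    · exact hne t htk le_rfl heq
    · -- IVT
      have hcont : ContinuousOn (fun s => pos v Δ i s - pos v Δ k s)
          (Set.Icc (fireTime Δ k) t) :=
        ((pos_continuous i).sub (pos_continuous k)).continuousOn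
      have h0mem : (0:ℝ) ∈ Set.Icc (pos v Δ i t - pos v Δ k t)
          (pos v Δ i (fireTime Δ k) - pos v Δ k (fireTime Δ k)) :=
        ⟨by linarith, by linarith⟩
      have := intermediate_value_Icc' (le_of_lt hlt) hcont h0mem
      obtain ⟨s, hsmem, hs0⟩ := this
      exact hne s hsmem.1 hsmem.2 (by dsimp at hs0; linarith)


/-- Restriction of a dynamics to a partner-closed subset. -/
def restrict (d : Dynamics v Δ I) (J : Set ℕ) (hJI : J ⊆ I)
    (hcl : ∀ k ∈ J, ∀ m, d.partner k = some m → m ∈ J) : Dynamics v Δ J where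
  partner := d.partner
  deathTime := d.deathTime
  partner_mem := fun i j hi hp => hcl i hi j hp
  partner_symm := fun i j hi hj => d.partner_symm i j (hJI hi) (hJI hj)
  partner_ne := fun i hi => d.partner_ne i (hJI hi)
  death_symm := fun i j hi hp => d.death_symm i j (hJI hi) hp
  collide := fun i j hi hij hp => d.collide i j (hJI hi) hij hp
  no_crossing := fun i j hi hj hij t h1 h2 h3 h4 =>
    d.no_crossing i j (hJI hi) (hJI hj) hij t h1 h2 h3 h4

lemma restrict_surv (d : Dynamics v Δ I) (J : Set ℕ) (hJI : J ⊆ I)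
    (hcl : ∀ k ∈ J, ∀ m, d.partner k = some m → m ∈ J) :
    (d.restrict J hJI hcl).surv = d.surv ∩ J := by
  ext x
  simp only [surv, survives, restrict, Set.mem_setOf_eq, Set.mem_inter_iff]
  tauto

/-- Interval lemma: if `i < j` are matched, any `k` strictly between them is matched to
some `m` strictly between them, and dies strictly earlier. -/
lemma partner_between (d : Dynamics v Δ I) (hv : ∀ i, 0 < v i) (hΔ : ∀ i, 0 < Δ i)
    (htriple : NoTriple v Δ) {i j k : ℕ} (hi : i ∈ I) (hij : i < j)
    (hp : d.partner i = some j) (hk : k ∈ I) (h1 : i < k) (h2 : k < j) :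
    ∃ m, d.partner k = some m ∧ i < m ∧ m < j ∧ d.deathTime k < d.deathTime i := by
  have hj : j ∈ I := d.partner_mem i j hi hp
  have hpj : d.partner j = some i := (d.partner_symm i j hi hj).1 hp
  obtain ⟨hvij, hfj, hposT⟩ := d.collide i j hi hij hp
  set T := d.deathTime i with hT
  have hdeathj : d.deathTime j = T := d.death_symm i j hi hp
  have hfi : fireTime Δ i < fireTime Δ j := fireTime_lt_fireTime hΔ hij
  have hfk : fireTime Δ k < fireTime Δ j := fireTime_lt_fireTime hΔ h2
  have hfik : fireTime Δ i < fireTime Δ k := fireTime_lt_fireTime hΔ h1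
  -- strict : t_j < T
  have htjT : fireTime Δ j < T := by
    rcases eq_or_lt_of_le hfj with heq | h
    · exfalso
      have h0 : pos v Δ j T = 0 := by unfold pos; rw [← heq]; ring
      have h1' : 0 < pos v Δ i T := by
        unfold pos
        exact mul_pos (hv i) (by linarith)
      rw [hposT] at h1'
      linarith
    · exact h
  -- step 1 : k is matched and dies before T
  have step1 : d.partner k ≠ none ∧ d.deathTime k < T := by
    by_contra hcon
    have halive : d.partner k = none ∨ T ≤ d.deathTime k := by
      rcases h : d.partner k with _ | m
      · exact Or.inl rfl
      · right
        by_contra hlt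
        exact hcon ⟨by simp [h], by linarith⟩
    have key : ∀ t, fireTime Δ j ≤ t → t < T →
        pos v Δ k t < pos v Δ i t ∧ pos v Δ j t < pos v Δ k t := by
      intro t ht1 ht2
      have hkalive : d.partner k = none ∨ t < d.deathTime k := by
        rcases halive with h | h
        · exact Or.inl h
        · exact Or.inr (lt_of_lt_of_le ht2 h)
      constructor
      · exact d.order hv hΔ hi hk h1 (le_trans (le_of_lt hfk) ht1)
          (Or.inr ht2) hkalive
      · exact d.order hv hΔ hk hj h2 ht1 hkalive (Or.inr (by rw [hdeathj]; exact ht2))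
    have e1 : pos v Δ k T ≤ pos v Δ i T :=
      le_at_endpoint (pos_continuous k) (pos_continuous i) htjT
        (fun t ht1 ht2 => (key t ht1 ht2).1)
    have e2 : pos v Δ j T ≤ pos v Δ k T :=
      le_at_endpoint (pos_continuous j) (pos_continuous k) htjT
        (fun t ht1 ht2 => (key t ht1 ht2).2)
    have heq1 : pos v Δ i T = pos v Δ k T := by rw [hposT] at *; linarith
    have heq2 : pos v Δ k T = pos v Δ j T := by rw [hposT] at *; linarith
    exact htriple T i k j (Nat.ne_of_lt h1) (Nat.ne_of_lt h2) (Nat.ne_of_lt hij)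
      (by linarith) (by linarith) (le_of_lt htjT) ⟨heq1, heq2⟩
  obtain ⟨hkne, hdk⟩ := step1
  obtain ⟨m, hpk⟩ := Option.ne_none_iff_exists'.1 hkne
  have hm : m ∈ I := d.partner_mem k m hk hpk
  have hpm : d.partner m = some k := (d.partner_symm k m hk hm).1 hpk
  set T' := d.deathTime k with hT'
  have hdm : d.deathTime m = T' := d.death_symm k m hk hpk
  have hmnek : m ≠ k := fun h => d.partner_ne k hk (h ▸ hpk)
  have hmnei : m ≠ i := by
    intro h
    subst h
    rw [hp] at hpm
    have : j = k := by injection hpm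
    exact Nat.ne_of_lt h2 this.symm
  have hmnej : m ≠ j := by
    intro h
    subst h
    rw [hpj] at hpm
    have : i = k := by injection hpm
    exact Nat.ne_of_lt h1 this
  -- collide oriented : positions equal at T', firetimes ≤ T'
  have hcoll : pos v Δ k T' = pos v Δ m T' ∧ fireTime Δ k ≤ T' ∧ fireTime Δ m ≤ T' := by
    rcases lt_or_gt_of_ne hmnek with hlt | hgt
    · -- m < k
      obtain ⟨_, hf, hpe⟩ := d.collide m k hm hlt hpm
      rw [hdm] at hpe hf
      exact ⟨hpe.symm, hf, le_trans (le_of_lt (fireTime_lt_fireTime hΔ hlt)) hf⟩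
    · -- k < m
      obtain ⟨_, hf, hpe⟩ := d.collide k m hk hgt hpk
      exact ⟨hpe, le_trans (le_of_lt (fireTime_lt_fireTime hΔ hgt)) hf, hf⟩
  obtain ⟨hpe', hfkT', hfmT'⟩ := hcoll
  -- derive strict firetime bounds
  have hfkT's : fireTime Δ k < T' := by
    rcases eq_or_lt_of_le hfkT' with heq | h
    · exfalso
      have h0 : pos v Δ k T' = 0 := by unfold pos; rw [← heq]; ring
      have h0' : pos v Δ m T' = 0 := by rw [← hpe', h0]
      have : T' = fireTime Δ m := by
        unfold pos at h0'
        rcases mul_eq_zero.1 h0' with h | h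
        · exact absurd h (ne_of_gt (hv m))
        · linarith
      have hne : fireTime Δ m ≠ fireTime Δ k := by
        rcases lt_or_gt_of_ne hmnek with hlt | hgt
        · exact ne_of_lt (fireTime_lt_fireTime hΔ hlt)
        · exact ne_of_gt (fireTime_lt_fireTime hΔ hgt)
      rw [← heq] at this
      exact hne this.symm
    · exact h
  refine ⟨m, hpk, ?_, ?_, hdk⟩
  · -- i < m
    by_contra hmi
    push_neg at hmi
    have hmi' : m < i := lt_of_le_of_ne hmi hmnei
    -- order: pos m > pos i > pos k on [t_k, T')
    exfalso
    have key : ∀ t, fireTime Δ k ≤ t → t < T' →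
        pos v Δ i t < pos v Δ m t ∧ pos v Δ k t < pos v Δ i t := by
      intro t ht1 ht2
      have haliveT : t < T := lt_trans ht2 hdk
      constructor
      · exact d.order hv hΔ hm hi hmi' (le_trans (le_of_lt hfik) ht1)
          (Or.inr (by rw [hdm]; exact ht2)) (Or.inr haliveT)
      · exact d.order hv hΔ hi hk h1 ht1 (Or.inr haliveT) (Or.inr ht2)
    have e1 : pos v Δ i T' ≤ pos v Δ m T' :=
      le_at_endpoint (pos_continuous i) (pos_continuous m) hfkT's
        (fun t ht1 ht2 => (key t ht1 ht2).1)
    have e2 : pos v Δ k T' ≤ pos v Δ i T' :=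
      le_at_endpoint (pos_continuous k) (pos_continuous i) hfkT's
        (fun t ht1 ht2 => (key t ht1 ht2).2)
    exact htriple T' m i k (Nat.ne_of_lt hmi')
      (Nat.ne_of_lt h1) (Nat.ne_of_lt (lt_trans hmi' h1))
      hfmT' (by linarith [fireTime_lt_fireTime hΔ h1]) hfkT'
      ⟨by linarith, by linarith⟩
  · -- m < j
    by_contra hjm
    push_neg at hjm
    have hjm' : j < m := lt_of_le_of_ne hjm (Ne.symm hmnej)
    exfalso
    have hfmT's : fireTime Δ m < T' := by
      rcases eq_or_lt_of_le hfmT' with heq | h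
      · exfalso
        have h0 : pos v Δ m T' = 0 := by unfold pos; rw [← heq]; ring
        have h0' : pos v Δ k T' = 0 := by rw [hpe', h0]
        have : T' = fireTime Δ k := by
          unfold pos at h0'
          rcases mul_eq_zero.1 h0' with h | h
          · exact absurd h (ne_of_gt (hv k))
          · linarith
        rw [← heq] at this
        exact ne_of_lt hfkT's (by linarith)
      · exact h
    have key : ∀ t, fireTime Δ m ≤ t → t < T' →
        pos v Δ j t < pos v Δ k t ∧ pos v Δ m t < pos v Δ j t := by
      intro t ht1 ht2
      have haliveT : t < T := lt_trans ht2 hdk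
      have htj : fireTime Δ j ≤ t := le_trans (le_of_lt (fireTime_lt_fireTime hΔ hjm')) ht1
      constructor
      · exact d.order hv hΔ hk hj h2 htj (Or.inr ht2)
          (Or.inr (by rw [hdeathj]; exact haliveT))
      · exact d.order hv hΔ hj hm hjm' ht1
          (Or.inr (by rw [hdeathj]; exact haliveT)) (Or.inr (by rw [hdm]; exact ht2))
    have e1 : pos v Δ j T' ≤ pos v Δ k T' :=
      le_at_endpoint (pos_continuous j) (pos_continuous k) hfmT's
        (fun t ht1 ht2 => (key t ht1 ht2).1)
    have e2 : pos v Δ m T' ≤ pos v Δ j T' :=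
      le_at_endpoint (pos_continuous m) (pos_continuous j) hfmT's
        (fun t ht1 ht2 => (key t ht1 ht2).2)
    exact htriple T' k j m (Nat.ne_of_lt h2) (Nat.ne_of_lt hjm')
      (Nat.ne_of_lt (lt_trans h2 hjm')) hfkT'
      (le_trans (le_of_lt (fireTime_lt_fireTime hΔ hjm')) hfmT') hfmT'
      ⟨by linarith, by linarith⟩


/-- Shared first death: if `(i,k)` is a matched pair of `d` whose death time is not later
than any death in `d'`, then `(i,k)` is a matched pair of `d'` as well. -/
lemma shared_death {I' : Set ℕ} (d : Dynamics v Δ I) (d' : Dynamics v Δ I')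
    (hv : ∀ i, 0 < v i) (hΔ : ∀ i, 0 < Δ i) (htriple : NoTriple v Δ)
    {i k : ℕ} (hiI : i ∈ I) (hiI' : i ∈ I') (hkI' : k ∈ I') (hik : i < k)
    (hp : d.partner i = some k)
    (hmin : ∀ l ∈ I', d'.partner l ≠ none → d.deathTime i ≤ d'.deathTime l) :
    d'.partner i = some k := by
  obtain ⟨hvik, hfk, hpe⟩ := d.collide i k hiI hik hp
  set T := d.deathTime i with hT
  have hfik : fireTime Δ i < fireTime Δ k := fireTime_lt_fireTime hΔ hik
  have hfiT : fireTime Δ i ≤ T := le_trans (le_of_lt hfik) hfk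
  -- one of i, k is dead at T in d'
  have hdead : ∃ w ∈ ({i, k} : Set ℕ), d'.partner w ≠ none ∧ d'.deathTime w = T := by
    by_contra hcon
    push_neg at hcon
    have hai : d'.partner i = none ∨ T < d'.deathTime i := by
      rcases h : d'.partner i with _ | m
      · exact Or.inl rfl
      · right
        have h1 := hmin i hiI' (by simp [h])
        have h2 := hcon i (Or.inl rfl) (by simp [h])
        exact lt_of_le_of_ne h1 (Ne.symm h2)
    have hak : d'.partner k = none ∨ T < d'.deathTime k := by
      rcases h : d'.partner k with _ | m
      · exact Or.inl rfl
      · right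
        have h1 := hmin k hkI' (by simp [h])
        have h2 := hcon k (Or.inr rfl) (by simp [h])
        exact lt_of_le_of_ne h1 (Ne.symm h2)
    exact d'.no_crossing i k hiI' hkI' (Nat.ne_of_lt hik) T hfiT hfk hai hak hpe
  obtain ⟨w, hwmem0, hwne, hwT⟩ := hdead
  have hwmem : w = i ∨ w = k := by simpa using hwmem0
  obtain ⟨m, hpw⟩ := Option.ne_none_iff_exists'.1 hwne
  have hwI' : w ∈ I' := by rcases hwmem with h | h <;> subst h <;> assumption
  have hmI' : m ∈ I' := d'.partner_mem w m hwI' hpw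
  have hpm : d'.partner m = some w := (d'.partner_symm w m hwI' hmI').1 hpw
  have hmnew : m ≠ w := fun h => d'.partner_ne w hwI' (h ▸ hpw)
  have hfw : fireTime Δ w ≤ T := by
    rcases hwmem with h | h
    · subst h; exact hfiT
    · subst h; exact hfk
  have hdm : d'.deathTime m = T := by
    rw [d'.death_symm w m hwI' hpw, hwT]
  -- positions of w and m equal at T, and m fired by T
  have hcoll : pos v Δ w T = pos v Δ m T ∧ fireTime Δ m ≤ T := by
    rcases lt_or_gt_of_ne hmnew with hlt | hgt
    · obtain ⟨_, hf, hpe'⟩ := d'.collide m w hmI' hlt hpm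
      rw [hdm] at hpe' hf
      exact ⟨hpe'.symm, le_trans (le_of_lt (fireTime_lt_fireTime hΔ hlt)) hf⟩
    · obtain ⟨_, hf, hpe'⟩ := d'.collide w m hwI' hgt hpw
      rw [hwT] at hpe' hf
      exact ⟨hpe', hf⟩
  obtain ⟨hpe', hfm⟩ := hcoll
  have hposw : pos v Δ w T = pos v Δ i T := by
    rcases hwmem with h | h
    · subst h; rfl
    · subst h; exact hpe.symm
  have hmik : m = i ∨ m = k := by
    by_contra hcon
    push_neg at hcon
    exact htriple T i k m (Nat.ne_of_lt hik) (Ne.symm hcon.2) (Ne.symm hcon.1)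
      hfiT hfk hfm ⟨hpe, by rw [← hpe', hposw, ← hpe]⟩
  rcases hwmem with h | h
  · subst h
    rcases hmik with h' | h'
    · exact absurd h' hmnew
    · exact h' ▸ hpw
  · subst h
    rcases hmik with h' | h'
    · subst h'
      exact hpm
    · exact absurd h' hmnew

/-- Uniqueness of the dynamics on a finite index set. -/
lemma partner_unique (hv : ∀ i, 0 < v i) (hΔ : ∀ i, 0 < Δ i) (htriple : NoTriple v Δ) :
    ∀ (N : ℕ) (I I' : Set ℕ), I.Finite → I.ncard ≤ N → I = I' →
    ∀ (d : Dynamics v Δ I) (d' : Dynamics v Δ I'),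
    ∀ i ∈ I, d.partner i = d'.partner i := by
  intro N
  induction N with
  | zero =>
    intro I I' hfin hcard _ d d' i hi
    have h0 : I.ncard = 0 := Nat.le_zero.1 hcard
    rw [Set.ncard_eq_zero hfin] at h0
    rw [h0] at hi
    exact absurd hi (Set.notMem_empty i)
  | succ N ih =>
    intro I I' hfin hcard hII' d d' i hi
    subst hII'
    by_cases hM : (∀ l ∈ I, d.partner l = none) ∧ (∀ l ∈ I, d'.partner l = none)
    · rw [hM.1 i hi, hM.2 i hi]
    · -- build the set of death times
      have hSfin : ((fun l => d.deathTime l) '' {l ∈ I | d.partner l ≠ none} ∪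
          (fun l => d'.deathTime l) '' {l ∈ I | d'.partner l ≠ none}).Finite :=
        ((hfin.subset (Set.sep_subset _ _)).image _).union
          ((hfin.subset (Set.sep_subset _ _)).image _)
      have hSne : ((fun l => d.deathTime l) '' {l ∈ I | d.partner l ≠ none} ∪
          (fun l => d'.deathTime l) '' {l ∈ I | d'.partner l ≠ none}).Nonempty := by
        rw [not_and_or] at hM
        rcases hM with hM | hM
        · push_neg at hM
          obtain ⟨l, hl, hlne⟩ := hM
          exact ⟨d.deathTime l, Or.inl ⟨l, ⟨hl, hlne⟩, rfl⟩⟩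
        · push_neg at hM
          obtain ⟨l, hl, hlne⟩ := hM
          exact ⟨d'.deathTime l, Or.inr ⟨l, ⟨hl, hlne⟩, rfl⟩⟩
      obtain ⟨T, hTS, hTmin⟩ := Set.exists_min_image _ id hSfin hSne
      have hminD : ∀ l ∈ I, d.partner l ≠ none → T ≤ d.deathTime l := by
        intro l hl hlne
        exact hTmin _ (Or.inl ⟨l, ⟨hl, hlne⟩, rfl⟩)
      have hminD' : ∀ l ∈ I, d'.partner l ≠ none → T ≤ d'.deathTime l := by
        intro l hl hlne
        exact hTmin _ (Or.inr ⟨l, ⟨hl, hlne⟩, rfl⟩)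
      -- get a shared pair (p, q), p < q
      have hpair : ∃ p q, p ∈ I ∧ q ∈ I ∧ p < q ∧ d.partner p = some q ∧
          d'.partner p = some q := by
        rcases hTS with ⟨l, ⟨hl, hlne⟩, hlT0⟩ | ⟨l, ⟨hl, hlne⟩, hlT0⟩
        · have hlT : d.deathTime l = T := hlT0
          obtain ⟨m, hpl⟩ := Option.ne_none_iff_exists'.1 hlne
          have hmI : m ∈ I := d.partner_mem l m hl hpl
          have hml : m ≠ l := fun h => d.partner_ne l hl (h ▸ hpl)
          rcases lt_or_gt_of_ne hml with hlt | hgt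
          · -- pair (m, l)
            have hpm : d.partner m = some l := (d.partner_symm l m hl hmI).1 hpl
            have hdm : d.deathTime m = T := by
              rw [d.death_symm l m hl hpl]; exact hlT
            refine ⟨m, l, hmI, hl, hlt, hpm, ?_⟩
            exact shared_death d d' hv hΔ htriple hmI hmI hl hlt hpm
              (by rw [hdm]; exact hminD')
          · refine ⟨l, m, hl, hmI, hgt, hpl, ?_⟩
            exact shared_death d d' hv hΔ htriple hl hl hmI hgt hpl
              (by rw [hlT]; exact hminD')
        · have hlT : d'.deathTime l = T := hlT0
          obtain ⟨m, hpl⟩ := Option.ne_none_iff_exists'.1 hlne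
          have hmI : m ∈ I := d'.partner_mem l m hl hpl
          have hml : m ≠ l := fun h => d'.partner_ne l hl (h ▸ hpl)
          rcases lt_or_gt_of_ne hml with hlt | hgt
          · have hpm : d'.partner m = some l := (d'.partner_symm l m hl hmI).1 hpl
            have hdm : d'.deathTime m = T := by
              rw [d'.death_symm l m hl hpl]; exact hlT
            refine ⟨m, l, hmI, hl, hlt, ?_, hpm⟩
            exact shared_death d' d hv hΔ htriple hmI hmI hl hlt hpm
              (by rw [hdm]; exact hminD)
          · refine ⟨l, m, hl, hmI, hgt, ?_, hpl⟩
            exact shared_death d' d hv hΔ htriple hl hl hmI hgt hpl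
              (by rw [hlT]; exact hminD)
      obtain ⟨p, q, hpI, hqI, hpq, hdp, hdp'⟩ := hpair
      have hdq : d.partner q = some p := (d.partner_symm p q hpI hqI).1 hdp
      have hdq' : d'.partner q = some p := (d'.partner_symm p q hpI hqI).1 hdp'
      rcases eq_or_ne i p with rfl | hip
      · rw [hdp, hdp']
      rcases eq_or_ne i q with rfl | hiq
      · rw [hdq, hdq']
      -- restrict
      have hclD : ∀ l ∈ I \ {p, q}, ∀ m, d.partner l = some m → m ∈ I \ {p, q} := by
        intro l hl m hplm
        have hmI : m ∈ I := d.partner_mem l m hl.1 hplm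
        refine ⟨hmI, ?_⟩
        intro hmem
        have hm2 : m = p ∨ m = q := by simpa using hmem
        have hlpq : l = q ∨ l = p := by
          rcases hm2 with h | h
          · left
            have h3 := (d.partner_symm l p hl.1 hpI).1 (h ▸ hplm)
            rw [hdp] at h3
            injection h3 with h4
            exact h4.symm
          · right
            have h3 := (d.partner_symm l q hl.1 hqI).1 (h ▸ hplm)
            rw [hdq] at h3
            injection h3 with h4
            exact h4.symm
        rcases hlpq with h | h <;> exact hl.2 (by simp [h])
      have hclD' : ∀ l ∈ I \ {p, q}, ∀ m, d'.partner l = some m → m ∈ I \ {p, q} := by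
        intro l hl m hplm
        have hmI : m ∈ I := d'.partner_mem l m hl.1 hplm
        refine ⟨hmI, ?_⟩
        intro hmem
        have hm2 : m = p ∨ m = q := by simpa using hmem
        have hlpq : l = q ∨ l = p := by
          rcases hm2 with h | h
          · left
            have h3 := (d'.partner_symm l p hl.1 hpI).1 (h ▸ hplm)
            rw [hdp'] at h3
            injection h3 with h4
            exact h4.symm
          · right
            have h3 := (d'.partner_symm l q hl.1 hqI).1 (h ▸ hplm)
            rw [hdq'] at h3
            injection h3 with h4
            exact h4.symm
        rcases hlpq with h | h <;> exact hl.2 (by simp [h])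
      have hsub : I \ {p, q} ⊆ I := Set.diff_subset
      have hcard' : (I \ {p, q}).ncard ≤ N := by
        have h1 : I \ {p, q} ⊆ I \ {p} := by
          intro x hx
          exact ⟨hx.1, fun h => hx.2 (Or.inl h)⟩
        have h2 : (I \ {p, q}).ncard ≤ (I \ {p}).ncard :=
          Set.ncard_le_ncard h1 (hfin.subset Set.diff_subset)
        have h3 : (I \ {p}).ncard = I.ncard - 1 :=
          Set.ncard_diff_singleton_of_mem hpI
        omega
      have := ih (I \ {p, q}) (I \ {p, q}) (hfin.subset hsub) hcard' rfl
        (d.restrict _ hsub hclD) (d'.restrict _ hsub hclD')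
        i ⟨hi, fun h => by rcases h with h | h; exacts [hip h, hiq h]⟩
      exact this

/-- Coupling lemma: removing the leading bullet `a` does not affect the matching
of the bullets strictly between `a` and its partner `j`. -/
lemma coupling (hv : ∀ i, 0 < v i) (hΔ : ∀ i, 0 < Δ i) (htriple : NoTriple v Δ) :
    ∀ (N : ℕ) (I I' : Set ℕ), I.Finite → I.ncard ≤ N → ∀ a : ℕ, I' = I \ {a} →
    ∀ (d : Dynamics v Δ I) (d' : Dynamics v Δ I') (j : ℕ), a ∈ I → a < j →
    d.partner a = some j →
    ∀ k ∈ I, a < k → k < j → d'.partner k = d.partner k := by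
  intro N
  induction N with
  | zero =>
    intro I I' hfin hcard a hI' d d' j haI haj hpaj k hk hak hkj
    have h0 : I.ncard = 0 := Nat.le_zero.1 hcard
    rw [Set.ncard_eq_zero hfin] at h0
    rw [h0] at haI
    exact absurd haI (Set.notMem_empty a)
  | succ N ih =>
    intro I I' hfin hcard a hI' d d' j haI haj hpaj k hk hak hkj
    subst hI'
    have hjI : j ∈ I := d.partner_mem a j haI hpaj
    have hpja : d.partner j = some a := (d.partner_symm a j haI hjI).1 hpaj
    obtain ⟨mk, hpmk, hamk, hmkj, hdkT⟩ :=
      d.partner_between hv hΔ htriple haI haj hpaj hk hak hkj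
    have hSfin : ((fun l => d.deathTime l) '' {l ∈ I | d.partner l ≠ none} ∪
        (fun l => d'.deathTime l) '' {l ∈ I \ {a} | d'.partner l ≠ none}).Finite :=
      ((hfin.subset (Set.sep_subset _ _)).image _).union
        (((hfin.subset Set.diff_subset).subset (Set.sep_subset _ _)).image _)
    have hSne : ((fun l => d.deathTime l) '' {l ∈ I | d.partner l ≠ none} ∪
        (fun l => d'.deathTime l) '' {l ∈ I \ {a} | d'.partner l ≠ none}).Nonempty :=
      ⟨d.deathTime a, Or.inl ⟨a, ⟨haI, by simp [hpaj]⟩, rfl⟩⟩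
    obtain ⟨T, hTS, hTmin⟩ := Set.exists_min_image _ id hSfin hSne
    have hminD : ∀ l ∈ I, d.partner l ≠ none → T ≤ d.deathTime l := by
      intro l hl hlne
      exact hTmin _ (Or.inl ⟨l, ⟨hl, hlne⟩, rfl⟩)
    have hminD' : ∀ l ∈ I \ {a}, d'.partner l ≠ none → T ≤ d'.deathTime l := by
      intro l hl hlne
      exact hTmin _ (Or.inr ⟨l, ⟨hl, hlne⟩, rfl⟩)
    have hpair : ∃ p q, p ∈ I ∧ q ∈ I ∧ p ≠ a ∧ q ≠ a ∧ p < q ∧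
        d.partner p = some q ∧ d'.partner p = some q := by
      rcases hTS with ⟨l, ⟨hl, hlne⟩, hlT0⟩ | ⟨l, ⟨hl, hlne⟩, hlT0⟩
      · have hlT : d.deathTime l = T := hlT0
        obtain ⟨m, hpl⟩ := Option.ne_none_iff_exists'.1 hlne
        have hmI : m ∈ I := d.partner_mem l m hl hpl
        have hml : m ≠ l := fun h => d.partner_ne l hl (h ▸ hpl)
        -- orient
        have horient : ∃ p q, p ∈ I ∧ q ∈ I ∧ p < q ∧ d.partner p = some q ∧
            d.deathTime p = T := by
          rcases lt_or_gt_of_ne hml with hlt | hgt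
          · exact ⟨m, l, hmI, hl, hlt, (d.partner_symm l m hl hmI).1 hpl,
              by rw [d.death_symm l m hl hpl]; exact hlT⟩
          · exact ⟨l, m, hl, hmI, hgt, hpl, hlT⟩
        obtain ⟨p, q, hpI, hqI, hpq, hdp, hdpT⟩ := horient
        have hpa : p ≠ a := by
          intro h
          subst h
          rw [hpaj] at hdp
          have hqj : q = j := by injection hdp with h2; exact h2.symm
          subst hqj
          have h1 := hminD k hk (by simp [hpmk])
          rw [hdpT] at hdkT
          linarith
        have hqa : q ≠ a := by
          intro h
          subst h
          have h3 := (d.partner_symm p q hpI hqI).1 hdp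
          rw [hpaj] at h3
          have : p = j := by injection h3 with h2; exact h2.symm
          subst this
          exact absurd hpq (lt_asymm haj)
        refine ⟨p, q, hpI, hqI, hpa, hqa, hpq, hdp, ?_⟩
        exact shared_death d d' hv hΔ htriple hpI ⟨hpI, hpa⟩ ⟨hqI, hqa⟩ hpq hdp
          (by rw [hdpT]; exact hminD')
      · have hlT : d'.deathTime l = T := hlT0
        obtain ⟨m, hpl⟩ := Option.ne_none_iff_exists'.1 hlne
        have hmI : m ∈ I \ {a} := d'.partner_mem l m hl hpl
        have hml : m ≠ l := fun h => d'.partner_ne l hl (h ▸ hpl)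
        have horient : ∃ p q, p ∈ I \ {a} ∧ q ∈ I \ {a} ∧ p < q ∧
            d'.partner p = some q ∧ d'.deathTime p = T := by
          rcases lt_or_gt_of_ne hml with hlt | hgt
          · exact ⟨m, l, hmI, hl, hlt, (d'.partner_symm l m hl hmI).1 hpl,
              by rw [d'.death_symm l m hl hpl]; exact hlT⟩
          · exact ⟨l, m, hl, hmI, hgt, hpl, hlT⟩
        obtain ⟨p, q, hpI, hqI, hpq, hdp, hdpT⟩ := horient
        refine ⟨p, q, hpI.1, hqI.1, hpI.2, hqI.2, hpq, ?_, hdp⟩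
        exact shared_death d' d hv hΔ htriple hpI hpI.1 hqI.1 hpq hdp
          (by rw [hdpT]; exact hminD)
    obtain ⟨p, q, hpI, hqI, hpa, hqa, hpq, hdp, hdp'⟩ := hpair
    have hdq : d.partner q = some p := (d.partner_symm p q hpI hqI).1 hdp
    have hdq' : d'.partner q = some p :=
      (d'.partner_symm p q ⟨hpI, hpa⟩ ⟨hqI, hqa⟩).1 hdp'
    have hpj2 : p ≠ j := by
      intro h
      subst h
      rw [hpja] at hdp
      have : a = q := by injection hdp
      exact hqa this.symm
    have hqj2 : q ≠ j := by
      intro h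
      subst h
      rw [hpja] at hdq
      have : a = p := by injection hdq
      exact hpa this.symm
    rcases eq_or_ne k p with rfl | hkp
    · rw [hdp, hdp']
    rcases eq_or_ne k q with rfl | hkq
    · rw [hdq, hdq']
    -- restrict both and apply ih
    have hsub : I \ {p, q} ⊆ I := Set.diff_subset
    have hsub' : (I \ {a}) \ {p, q} ⊆ I \ {a} := Set.diff_subset
    have hclD : ∀ l ∈ I \ {p, q}, ∀ m, d.partner l = some m → m ∈ I \ {p, q} := by
      intro l hl m hplm
      have hmI : m ∈ I := d.partner_mem l m hl.1 hplm
      refine ⟨hmI, ?_⟩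
      intro hmem
      have hm2 : m = p ∨ m = q := by simpa using hmem
      have hlpq : l = q ∨ l = p := by
        rcases hm2 with h | h
        · left
          have h3 := (d.partner_symm l p hl.1 hpI).1 (h ▸ hplm)
          rw [hdp] at h3
          injection h3 with h4
          exact h4.symm
        · right
          have h3 := (d.partner_symm l q hl.1 hqI).1 (h ▸ hplm)
          rw [hdq] at h3
          injection h3 with h4
          exact h4.symm
      rcases hlpq with h | h <;> exact hl.2 (by simp [h])
    have hclD' : ∀ l ∈ (I \ {a}) \ {p, q}, ∀ m, d'.partner l = some m →
        m ∈ (I \ {a}) \ {p, q} := by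
      intro l hl m hplm
      have hmI : m ∈ I \ {a} := d'.partner_mem l m hl.1 hplm
      refine ⟨hmI, ?_⟩
      intro hmem
      have hm2 : m = p ∨ m = q := by simpa using hmem
      have hlpq : l = q ∨ l = p := by
        rcases hm2 with h | h
        · left
          have h3 := (d'.partner_symm l p hl.1 ⟨hpI, hpa⟩).1 (h ▸ hplm)
          rw [hdp'] at h3
          injection h3 with h4
          exact h4.symm
        · right
          have h3 := (d'.partner_symm l q hl.1 ⟨hqI, hqa⟩).1 (h ▸ hplm)
          rw [hdq'] at h3
          injection h3 with h4
          exact h4.symm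
      rcases hlpq with h | h <;> exact hl.2 (by simp [h])
    have hcard' : (I \ {p, q}).ncard ≤ N := by
      have h1 : I \ {p, q} ⊆ I \ {p} := by
        intro x hx
        exact ⟨hx.1, fun h => hx.2 (Or.inl h)⟩
      have h2 : (I \ {p, q}).ncard ≤ (I \ {p}).ncard :=
        Set.ncard_le_ncard h1 (hfin.subset Set.diff_subset)
      have h3 : (I \ {p}).ncard = I.ncard - 1 :=
        Set.ncard_diff_singleton_of_mem hpI
      omega
    have hseteq : (I \ {a}) \ {p, q} = (I \ {p, q}) \ {a} := by
      ext x
      simp only [Set.mem_diff]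
      tauto
    exact ih (I \ {p, q}) ((I \ {a}) \ {p, q}) (hfin.subset hsub) hcard' a hseteq
      (d.restrict _ hsub hclD) (d'.restrict _ hsub' hclD') j
      ⟨haI, fun h => by rcases h with h | h; exacts [hpa h.symm, hqa h.symm]⟩
      haj hpaj k ⟨hk, fun h => by rcases h with h | h; exacts [hkp h, hkq h]⟩ hak hkj

end Dynamics

lemma nat_set_min (S : Set ℕ) (h : S.Nonempty) : ∃ m ∈ S, ∀ x ∈ S, m ≤ x := by
  classical
  have h' : ∃ k, k ∈ S := h
  exact ⟨Nat.find h', Nat.find_spec h', fun x hx => Nat.find_min' h' hx⟩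

/-- The general front-bullet lemma, on `Icc a n` versus `Icc (a+1) n`. -/
lemma gen_front (hv : ∀ i, 0 < v i) (hΔ : ∀ i, 0 < Δ i) (htriple : NoTriple v Δ) :
    ∀ (N a n : ℕ), a ≤ n → n + 1 - a ≤ N →
    ∀ (I1 I0 : Set ℕ), I1 = Set.Icc (a+1) n → I0 = Set.Icc a n →
    ∀ (d1 : Dynamics v Δ I1) (d0 : Dynamics v Δ I0),
    (d1.surv = ∅ → d0.surv.encard = 1) ∧
      (∀ s₁ ∈ d1.surv, (∀ s ∈ d1.surv, s₁ ≤ s) →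
        d0.surv = d1.surv \ {s₁} ∨ ∃ s₀ < s₁, d0.surv = insert s₀ d1.surv) := by
  intro N
  induction N with
  | zero =>
    intro a n han hN
    exfalso
    omega
  | succ N ih =>
    intro a n han hN I1 I0 hI1 hI0 d1 d0
    subst hI1
    subst hI0
    have ha0 : a ∈ Set.Icc a n := Set.mem_Icc.2 ⟨le_rfl, han⟩
    have hseteq : Set.Icc (a+1) n = Set.Icc a n \ {a} := by
      ext x
      simp only [Set.mem_Icc, Set.mem_diff, Set.mem_singleton_iff]
      omega
    cases hpa : d0.partner a with
    | none =>
      have hcl : ∀ l ∈ Set.Icc a n \ {a}, ∀ m, d0.partner l = some m →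
          m ∈ Set.Icc a n \ {a} := by
        intro l hl m hplm
        have hmI := d0.partner_mem l m hl.1 hplm
        refine ⟨hmI, ?_⟩
        intro hma
        have hma' : m = a := by simpa using hma
        have h3 := (d0.partner_symm l a hl.1 ha0).1 (hma' ▸ hplm)
        rw [hpa] at h3
        exact absurd h3 (by simp)
      set r := d0.restrict _ Set.diff_subset hcl with hr
      have huniq : ∀ i ∈ Set.Icc a n \ {a}, r.partner i = d1.partner i :=
        Dynamics.partner_unique hv hΔ htriple ((Set.Icc a n \ {a}).ncard) _ _
          ((Set.finite_Icc a n).subset Set.diff_subset) le_rfl hseteq.symm r d1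
      have haS : a ∈ d0.surv := ⟨ha0, hpa⟩
      have hsurvd1 : d1.surv = d0.surv \ {a} := by
        ext x
        simp only [Dynamics.surv, Dynamics.survives, Set.mem_setOf_eq, Set.mem_diff,
          Set.mem_singleton_iff]
        constructor
        · rintro ⟨hx, hpn⟩
          have hx' : x ∈ Set.Icc a n \ {a} := hseteq ▸ hx
          have heqp := huniq x hx'
          refine ⟨⟨hx'.1, heqp.trans hpn⟩, ?_⟩
          simpa using hx'.2
        · rintro ⟨⟨hx, hpn⟩, hxa⟩
          have hx' : x ∈ Set.Icc a n \ {a} := ⟨hx, by simpa using hxa⟩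
          have heqp := huniq x hx'
          exact ⟨hseteq.symm ▸ hx', heqp.symm.trans hpn⟩
      have hd0surv : d0.surv = insert a d1.surv := by
        have h5 : insert a d1.surv = d0.surv := by
          rw [hsurvd1, Set.insert_diff_singleton]
          exact Set.insert_eq_self.2 haS
        exact h5.symm
      refine ⟨?_, ?_⟩
      · intro h1
        rw [hd0surv, h1]
        simp
      · intro s₁ hs₁ _
        right
        have hlt : a < s₁ := by
          have := (Set.mem_Icc.1 hs₁.1).1
          omega
        exact ⟨a, hlt, hd0surv⟩
    | some j =>
      have hjI : j ∈ Set.Icc a n := d0.partner_mem a j ha0 hpa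
      have hja : j ≠ a := fun h => d0.partner_ne a ha0 (h ▸ hpa)
      have haj : a < j := lt_of_le_of_ne (Set.mem_Icc.1 hjI).1 (Ne.symm hja)
      have hjn : j ≤ n := (Set.mem_Icc.1 hjI).2
      have hpja : d0.partner j = some a := (d0.partner_symm a j ha0 hjI).1 hpa
      have hbet : ∀ k ∈ Set.Icc a n, a < k → k < j →
          ∃ m, d0.partner k = some m ∧ a < m ∧ m < j ∧
            d0.deathTime k < d0.deathTime a :=
        fun k hk h1 h2 => d0.partner_between hv hΔ htriple ha0 haj hpa hk h1 h2
      -- J0 := Icc a n \ {a, j}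
      have hclJ0 : ∀ l ∈ Set.Icc a n \ {a, j}, ∀ m, d0.partner l = some m →
          m ∈ Set.Icc a n \ {a, j} := by
        intro l hl m hplm
        have hmI := d0.partner_mem l m hl.1 hplm
        refine ⟨hmI, ?_⟩
        intro hmem
        have hm2 : m = a ∨ m = j := by simpa using hmem
        rcases hm2 with h | h
        · have h3 := (d0.partner_symm l a hl.1 ha0).1 (h ▸ hplm)
          rw [hpa] at h3
          have : j = l := by injection h3
          exact hl.2 (by simp [← this])
        · have h3 := (d0.partner_symm l j hl.1 hjI).1 (h ▸ hplm)
          rw [hpja] at h3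
          have : a = l := by injection h3
          exact hl.2 (by simp [← this])
      set e := d0.restrict _ Set.diff_subset hclJ0 with he
      -- J1 := (Icc a n \ {a, j}) ∩ Ioi j
      have hclJ1 : ∀ l ∈ (Set.Icc a n \ {a, j}) ∩ Set.Ioi j, ∀ m,
          e.partner l = some m → m ∈ (Set.Icc a n \ {a, j}) ∩ Set.Ioi j := by
        intro l hl m hplm
        have hmJ0 : m ∈ Set.Icc a n \ {a, j} := hclJ0 l hl.1 m hplm
        refine ⟨hmJ0, ?_⟩
        have hmj : m ≠ j := fun h => hmJ0.2 (by simp [h])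
        have hma : m ≠ a := fun h => hmJ0.2 (by simp [h])
        by_contra hmlt
        simp only [Set.mem_Ioi, not_lt] at hmlt
        have hmltj : m < j := lt_of_le_of_ne hmlt hmj
        have hamlt : a < m := lt_of_le_of_ne (Set.mem_Icc.1 hmJ0.1).1 (Ne.symm hma)
        obtain ⟨m', hpm', _, hm'j, _⟩ := hbet m hmJ0.1 hamlt hmltj
        have h3 := (d0.partner_symm l m hl.1.1 hmJ0.1).1 hplm
        rw [hpm'] at h3
        have : m' = l := by injection h3
        have hlj : j < l := hl.2
        omega
      set e' := e.restrict _ Set.inter_subset_left hclJ1 with he'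
      have hJ1eq : (Set.Icc a n \ {a, j}) ∩ Set.Ioi j = Set.Icc (j+1) n := by
        ext x
        simp only [Set.mem_inter_iff, Set.mem_diff, Set.mem_Icc, Set.mem_Ioi,
          Set.mem_insert_iff, Set.mem_singleton_iff]
        omega
      -- survivor identifications for d0
      have hd0subJ0 : d0.surv ⊆ Set.Icc a n \ {a, j} := by
        intro s hs
        refine ⟨hs.1, ?_⟩
        intro hmem
        have h2 : s = a ∨ s = j := by simpa using hmem
        rcases h2 with h | h
        · rw [h] at hs
          have h4 : d0.partner a = none := hs.2
          rw [hpa] at h4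
          exact absurd h4 (by simp)
        · rw [h] at hs
          have h4 : d0.partner j = none := hs.2
          rw [hpja] at h4
          exact absurd h4 (by simp)
      have hd0subIoi : d0.surv ⊆ Set.Ioi j := by
        intro s hs
        have hsJ0 := hd0subJ0 hs
        have hsa : s ≠ a := fun h => hsJ0.2 (by simp [h])
        have hsj : s ≠ j := fun h => hsJ0.2 (by simp [h])
        have has : a < s := lt_of_le_of_ne (Set.mem_Icc.1 hs.1).1 (Ne.symm hsa)
        by_contra hlt
        simp only [Set.mem_Ioi, not_lt] at hlt
        have hsltj : s < j := lt_of_le_of_ne hlt hsj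
        obtain ⟨m', hpm', _, _, _⟩ := hbet s hs.1 has hsltj
        exact absurd ((hs.2 : d0.partner s = none) ▸ hpm') (by simp)
      have hsurv_e' : e'.surv = d0.surv := by
        rw [he', Dynamics.restrict_surv, he, Dynamics.restrict_surv]
        apply Set.eq_of_subset_of_subset
        · intro x hx
          exact hx.1.1
        · intro x hx
          exact ⟨⟨hx, hd0subJ0 hx⟩, hd0subJ0 hx, hd0subIoi hx⟩
      -- coupling : d1 agrees with d0 on (a, j)
      have hcoup : ∀ k ∈ Set.Icc a n, a < k → k < j → d1.partner k = d0.partner k :=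
        Dynamics.coupling hv hΔ htriple ((Set.Icc a n).ncard) _ _
          (Set.finite_Icc a n) le_rfl a hseteq d0 d1 j ha0 haj hpa
      -- K := Icc (a+1) n ∩ Ici j
      have hclK : ∀ l ∈ Set.Icc (a+1) n ∩ Set.Ici j, ∀ m,
          d1.partner l = some m → m ∈ Set.Icc (a+1) n ∩ Set.Ici j := by
        intro l hl m hplm
        have hmI : m ∈ Set.Icc (a+1) n := d1.partner_mem l m hl.1 hplm
        refine ⟨hmI, ?_⟩
        by_contra hmlt
        simp only [Set.mem_Ici, not_le] at hmlt
        have ham : a < m := by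
          have := (Set.mem_Icc.1 hmI).1
          omega
        have hmIcc : m ∈ Set.Icc a n := Set.mem_Icc.2 ⟨le_of_lt ham, (Set.mem_Icc.1 hmI).2⟩
        obtain ⟨m', hpm', _, hm'j, _⟩ := hbet m hmIcc ham hmlt
        have hco := hcoup m hmIcc ham hmlt
        have h3 := (d1.partner_symm l m hl.1 hmI).1 hplm
        rw [hco, hpm'] at h3
        have : m' = l := by injection h3
        have hlj : j ≤ l := hl.2
        omega
      set f := d1.restrict _ Set.inter_subset_left hclK with hf
      have hKeq : Set.Icc (a+1) n ∩ Set.Ici j = Set.Icc j n := by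
        ext x
        simp only [Set.mem_inter_iff, Set.mem_Icc, Set.mem_Ici]
        omega
      have hd1subK : d1.surv ⊆ Set.Icc (a+1) n ∩ Set.Ici j := by
        intro s hs
        refine ⟨hs.1, ?_⟩
        by_contra hlt
        simp only [Set.mem_Ici, not_le] at hlt
        have has : a < s := by
          have := (Set.mem_Icc.1 hs.1).1
          omega
        have hsIcc : s ∈ Set.Icc a n := Set.mem_Icc.2 ⟨le_of_lt has, (Set.mem_Icc.1 hs.1).2⟩
        obtain ⟨m', hpm', _, _, _⟩ := hbet s hsIcc has hlt
        have hco := hcoup s hsIcc has hlt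
        rw [(hs.2 : d1.partner s = none), hpm'] at hco
        exact absurd hco (by simp)
      have hsurv_f : f.surv = d1.surv := by
        rw [hf, Dynamics.restrict_surv]
        apply Set.eq_of_subset_of_subset
        · intro x hx
          exact hx.1
        · intro x hx
          exact ⟨hx, hd1subK hx⟩
      -- apply the induction hypothesis at level j
      obtain ⟨ih1, ih2⟩ := ih j n hjn (by omega) _ _ hJ1eq hKeq e' f
      rw [hsurv_e', hsurv_f] at ih1 ih2
      constructor
      · intro hW
        by_cases hU : d0.surv = ∅
        · have h1 := ih1 hU
          rw [hW] at h1
          simp at h1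
        · obtain ⟨t, htU, htmin⟩ := nat_set_min _ (Set.nonempty_iff_ne_empty.2 hU)
          rcases ih2 t htU htmin with hcase | ⟨t0, _, hcase⟩
          · rw [hW] at hcase
            have hUt : d0.surv ⊆ {t} := by
              intro x hx
              by_contra hxt
              have : x ∈ d0.surv \ {t} := ⟨hx, hxt⟩
              rw [← hcase] at this
              exact this
            have : d0.surv = {t} := Set.eq_of_subset_of_subset hUt
              (by intro x hx; simp only [Set.mem_singleton_iff] at hx; exact hx ▸ htU)
            rw [this]
            simp
          · rw [hW] at hcase
            exact absurd hcase.symm (Set.insert_nonempty t0 d0.surv).ne_empty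
      · intro s₁ hs₁ hmin
        by_cases hU : d0.surv = ∅
        · have h1 := ih1 hU
          rw [Set.encard_eq_one] at h1
          obtain ⟨x, hx⟩ := h1
          have hsx : s₁ = x := by
            have := hx ▸ hs₁
            simpa using this
          left
          rw [hU, hx, hsx]
          simp
        · obtain ⟨t, htU, htmin⟩ := nat_set_min _ (Set.nonempty_iff_ne_empty.2 hU)
          rcases ih2 t htU htmin with hcase | ⟨t0, ht0lt, hcase⟩
          · right
            have hs₁U : s₁ ∈ d0.surv := by
              have := hcase ▸ hs₁
              exact this.1
            have hs₁net : s₁ ≠ t := by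
              have := hcase ▸ hs₁
              simpa using this.2
            have hlt : t < s₁ := lt_of_le_of_ne (htmin _ hs₁U) (Ne.symm hs₁net)
            refine ⟨t, hlt, ?_⟩
            rw [hcase, Set.insert_diff_singleton]
            exact (Set.insert_eq_self.2 htU).symm
          · left
            have ht0W : t0 ∈ d1.surv := by
              rw [hcase]
              exact Set.mem_insert _ _
            have ht0notU : t0 ∉ d0.surv := fun h => absurd (htmin _ h) (not_le.2 ht0lt)
            have hs₁eq : s₁ = t0 := by
              have h1 : s₁ ≤ t0 := hmin _ ht0W
              have h2 := hcase ▸ hs₁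
              rcases Set.mem_insert_iff.1 h2 with h | h
              · exact h
              · exfalso
                have := htmin _ h
                omega
            rw [hcase, hs₁eq, Set.insert_diff_self_of_notMem ht0notU]

end Aux

/-- Deterministic finite bullet process, no triple collisions.  If the survivor set
`S_{[1,n]}` of `(b_1, …, b_n)` is empty then `|S_n| = 1`; otherwise, with `s₁` the first
survivor of `S_{[1,n]}`, the survivor set `S_n` of `(b_0, …, b_n)` is either
`S_{[1,n]} \ {b_{s₁}}` or `S_{[1,n]} ∪ {b_{s₀}}` for some `s₀ < s₁`. -/
theorem add_bullet_front (v Δ : ℕ → ℝ) (hv : ∀ i, 0 < v i) (hΔ : ∀ i, 0 < Δ i)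
    (htriple : NoTriple v Δ) (n : ℕ)
    (d1 : Dynamics v Δ (Set.Icc 1 n)) (d0 : Dynamics v Δ (Set.Iic n)) :
    (d1.surv = ∅ → d0.surv.encard = 1) ∧
      (∀ s₁ ∈ d1.surv, (∀ s ∈ d1.surv, s₁ ≤ s) →
        d0.surv = d1.surv \ {s₁} ∨ ∃ s₀ < s₁, d0.surv = insert s₀ d1.surv) := by
  have h1 : Set.Icc 1 n = Set.Icc (0+1) n := rfl
  have h0 : Set.Iic n = Set.Icc 0 n := by ext x; simp
  exact gen_front hv hΔ htriple (n+1) 0 n (Nat.zero_le n) (by omega) _ _ h1 h0 d1 d0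

end BulletProcess
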